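/- For integers 1 ≤ k, l ≤ n with k ≠ l, the orthogonal exponential polynomials satisfy ∫₀^∞ E_{nk}(t) E_{nl}(t) dt = 0, and ∫₀^∞ E_{nk}(t)² dt = 1/(2k); moreover ∫₀^∞ E_{nk}(t) dt = 1/k. -/

import Mathlib

open Real MeasureTheory

open Finset

/-- A-kind orthogonal polynomials. -/
noncomputable def aKind (n k : ℕ) (x : ℝ) : ℝ :=
  ∑ j ∈ Finset.range (n - k + 1),
    (-1 : ℝ) ^ j * ((n - k).choose j : ℝ) * ((n + k + j).choose (n - k) : ℝ) * x ^ (k + j)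

/-- Orthogonal exponential polynomials `E_{nk}(t) = A_{nk}(e^{-t})`. -/
noncomputable def expA (n k : ℕ) (t : ℝ) : ℝ := aKind n k (Real.exp (-t))

noncomputable def Sker (M : ℕ) (a x : ℝ) : ℝ :=
  ∑ i ∈ Finset.range (M + 1),
    (-1 : ℝ) ^ i * ((M.choose i : ℕ) : ℝ) * (∏ r ∈ Finset.range M, (a + i - r)) / (x + i)

lemma Sker_succ (M : ℕ) (a x : ℝ) (hx : ∀ s : ℕ, s ≤ M + 1 → x + (s : ℝ) ≠ 0) :
    Sker (M + 1) a x = (a - M - x) * Sker M a x - (a - x) * Sker M a (x + 1) := by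
  set P : ℕ → ℝ := fun i => ∏ r ∈ Finset.range M, (a + i - r) with hP
  have hQ : ∀ i : ℕ, (∏ r ∈ Finset.range (M + 1), (a + (i : ℝ) - r)) = (a + i - M) * P i := by
    intro i
    rw [Finset.prod_range_succ]
    ring
  have hQ' : ∀ i : ℕ, (∏ r ∈ Finset.range (M + 1), (a + ((i : ℝ) + 1) - r))
      = (a + i + 1) * P i := by
    intro i
    rw [Finset.prod_range_succ']
    have : ∀ r ∈ Finset.range M, (a + ((i : ℝ) + 1) - ((r : ℕ) + 1 : ℕ)) = a + i - r := by
      intro r _; push_cast; ring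
    rw [Finset.prod_congr rfl this]
    ring
  -- step 1: split into two sums
  have key : Sker (M + 1) a x
      = (∑ i ∈ Finset.range (M + 1),
          (-1 : ℝ) ^ i * (M.choose i : ℝ) * ((∏ r ∈ Finset.range (M+1), (a + i - r))) / (x + i))
        - (∑ i ∈ Finset.range (M + 1),
          (-1 : ℝ) ^ i * (M.choose i : ℝ) * ((∏ r ∈ Finset.range (M+1), (a + (i+1:ℕ) - r))) / (x + (i+1:ℕ))) := by
    have h1 : (∑ i ∈ Finset.range (M + 1),
          (-1 : ℝ) ^ i * (M.choose i : ℝ) * ((∏ r ∈ Finset.range (M+1), (a + i - r))) / (x + i))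
        = (∑ i ∈ Finset.range (M + 2),
          (-1 : ℝ) ^ i * (M.choose i : ℝ) * ((∏ r ∈ Finset.range (M+1), (a + i - r))) / (x + i)) := by
      rw [Finset.sum_range_succ (n := M + 1)]
      simp [Nat.choose_succ_self]
    rw [h1, Finset.sum_range_succ' (n := M + 1), Sker, Finset.sum_range_succ' (n := M + 1)]
    push_cast [Nat.choose_succ_succ']
    have e : ∀ i ∈ Finset.range (M + 1),
        ((-1:ℝ) ^ (i + 1) * ((M.choose i : ℝ) + (M.choose (i+1) : ℝ)) *
          ∏ r ∈ Finset.range (M + 1), (a + ((i:ℝ) + 1) - r)) / (x + ((i:ℝ) + 1))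
        = ((-1:ℝ) ^ (i + 1) * (M.choose (i+1) : ℝ) *
            ∏ r ∈ Finset.range (M + 1), (a + ((i:ℝ) + 1) - r)) / (x + ((i:ℝ) + 1))
          - ((-1:ℝ) ^ i * (M.choose i : ℝ) *
            ∏ r ∈ Finset.range (M + 1), (a + ((i:ℝ) + 1) - r)) / (x + ((i:ℝ) + 1)) := by
      intro i _; ring
    rw [Finset.sum_congr rfl e, Finset.sum_sub_distrib]
    simp only [Nat.choose_zero_right, Nat.cast_one]
    ring
  rw [key]
  have hA : (∑ i ∈ Finset.range (M + 1),
        (-1 : ℝ) ^ i * (M.choose i : ℝ) * ((∏ r ∈ Finset.range (M+1), (a + i - r))) / (x + i))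
      = (a - (M:ℝ) - x) * Sker M a x
        + ∑ i ∈ Finset.range (M + 1), (-1 : ℝ) ^ i * (M.choose i : ℝ) * P i := by
    rw [Sker, Finset.mul_sum, ← Finset.sum_add_distrib]
    refine Finset.sum_congr rfl fun i hi => ?_
    have hxi : x + (i : ℝ) ≠ 0 := hx i (by have := Finset.mem_range.1 hi; omega)
    rw [hQ i]
    field_simp
    ring
  have hB : (∑ i ∈ Finset.range (M + 1),
        (-1 : ℝ) ^ i * (M.choose i : ℝ) * ((∏ r ∈ Finset.range (M+1), (a + (i+1:ℕ) - r))) / (x + (i+1:ℕ)))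
      = (a - x) * Sker M a (x + 1)
        + ∑ i ∈ Finset.range (M + 1), (-1 : ℝ) ^ i * (M.choose i : ℝ) * P i := by
    rw [Sker, Finset.mul_sum, ← Finset.sum_add_distrib]
    refine Finset.sum_congr rfl fun i hi => ?_
    have hxi : x + ((i : ℝ) + 1) ≠ 0 := by
      have := hx (i + 1) (by have := Finset.mem_range.1 hi; omega)
      push_cast at this
      convert this using 2
    push_cast
    rw [hQ' i]
    have h2 : x + 1 + (i:ℝ) ≠ 0 := by intro h; exact hxi (by linarith)
    field_simp
    ring
  rw [hA, hB]
  ring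

lemma Sker_eq (M : ℕ) (a : ℝ) : ∀ x : ℝ, (∀ s : ℕ, s ≤ M → x + (s : ℝ) ≠ 0) →
    Sker M a x = (M.factorial : ℝ) * (∏ r ∈ Finset.range M, (a - x - r))
      / (∏ s ∈ Finset.range (M + 1), (x + s)) := by
  induction M with
  | zero => intro x hx; simp [Sker]
  | succ M ih =>
    intro x hx
    have hx' : ∀ s : ℕ, s ≤ M → x + (s : ℝ) ≠ 0 := fun s hs => hx s (by omega)
    have hx1 : ∀ s : ℕ, s ≤ M → (x + 1) + (s : ℝ) ≠ 0 := by
      intro s hs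
      have := hx (s + 1) (by omega)
      push_cast at this
      intro h; apply this; linarith
    rw [Sker_succ M a x (fun s hs => hx s hs), ih x hx', ih (x + 1) hx1]
    set p := ∏ r ∈ Finset.range M, (a - x - r) with hp
    set p' := ∏ r ∈ Finset.range M, (a - (x + 1) - r) with hp'
    set d := ∏ s ∈ Finset.range (M + 1), (x + s) with hd
    set d' := ∏ s ∈ Finset.range (M + 1), (x + 1 + s) with hd'
    have h1 : ∏ r ∈ Finset.range (M + 1), (a - x - r) = p * (a - x - M) := by
      rw [hp, Finset.prod_range_succ]
    have h1' : ∏ r ∈ Finset.range (M + 1), (a - x - r) = (a - x) * p' := by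
      rw [hp', Finset.prod_range_succ']
      rw [Finset.prod_congr rfl (fun r _ => show a - x - ((r:ℕ) + 1 : ℕ) = a - (x+1) - r by push_cast; ring)]
      ring
    have h2 : ∏ s ∈ Finset.range (M + 2), (x + s) = d * (x + (M + 1)) := by
      rw [hd, Finset.prod_range_succ]; push_cast; ring
    have h2' : ∏ s ∈ Finset.range (M + 2), (x + s) = x * d' := by
      rw [hd', Finset.prod_range_succ']
      rw [Finset.prod_congr rfl (fun s _ => show x + ((s:ℕ) + 1 : ℕ) = x + 1 + s by push_cast; ring)]
      simp [mul_comm]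
    have hdne : d ≠ 0 := by
      rw [hd]
      exact Finset.prod_ne_zero_iff.2 fun s hs => hx s (by have := Finset.mem_range.1 hs; omega)
    have hd'ne : d' ≠ 0 := by
      rw [hd']
      exact Finset.prod_ne_zero_iff.2 fun s hs => hx1 s (by have := Finset.mem_range.1 hs; omega)
    have hxne : x ≠ 0 := by have := hx 0 (by omega); simpa using this
    have hMne : x + ((M : ℝ) + 1) ≠ 0 := by
      have := hx (M + 1) (by omega); push_cast at this; convert this using 2
    have h12 : x * d' = d * (x + ((M:ℝ) + 1)) := by rw [← h2', h2]
    have h11 : (a - x) * p' = p * (a - x - M) := by rw [← h1', h1]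
    have e2 : (a - x) * ((M.factorial : ℝ) * p' / d')
        = (M.factorial : ℝ) * (p * (a - x - M)) * x / (d * (x + ((M:ℝ) + 1))) := by
      rw [← h12, ← h11]
      field_simp
    rw [h1, h2, e2]
    push_cast [Nat.factorial_succ]
    field_simp
    ring

lemma prod_desc : ∀ (M N : ℕ), M ≤ N →
    ∏ r ∈ Finset.range M, ((N : ℝ) - r) = (N.factorial : ℝ) / ((N - M).factorial : ℝ) := by
  intro M
  induction M with
  | zero =>
    intro N _
    simp only [Finset.range_zero, Finset.prod_empty, Nat.sub_zero]
    rw [div_self (Nat.cast_ne_zero.2 (Nat.factorial_ne_zero _))]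
  | succ M ih =>
    intro N h
    rw [Finset.prod_range_succ, ih N (by omega)]
    have h4 : ((N - M : ℕ) : ℝ) = (N : ℝ) - M := by
      push_cast [Nat.cast_sub (show M ≤ N by omega)]; ring
    rw [← h4]
    have h1 : (N - M) = (N - (M+1)) + 1 := by omega
    rw [h1, Nat.factorial_succ]
    have h3 : ((N - (M+1)).factorial : ℝ) ≠ 0 := Nat.cast_ne_zero.2 (Nat.factorial_ne_zero _)
    have h5 : (((N - (M+1)) + 1 : ℕ) : ℝ) ≠ 0 := by positivity
    have h6 : (N : ℝ) - ((M : ℝ) + 1) + 1 ≠ 0 := by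
      have : (M : ℝ) < N := by exact_mod_cast (show M < N by omega)
      intro hc; linarith
    rw [Nat.cast_mul]
    field_simp

lemma cast_choose_prod {M N : ℕ} (h : M ≤ N) :
    ((N.choose M : ℕ) : ℝ) = (∏ r ∈ Finset.range M, ((N : ℝ) - r)) / (M.factorial : ℝ) := by
  rw [prod_desc M N h, Nat.cast_choose ℝ h]
  rw [div_div, mul_comm]

lemma prod_asc (b : ℕ) (hb : 1 ≤ b) : ∀ c : ℕ,
    ∏ s ∈ Finset.range c, ((b : ℝ) + s) = ((b + c - 1).factorial : ℝ) / ((b - 1).factorial : ℝ) := by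
  intro c
  induction c with
  | zero =>
    simp only [Finset.range_zero, Finset.prod_empty, Nat.add_zero]
    rw [div_self (Nat.cast_ne_zero.2 (Nat.factorial_ne_zero _))]
  | succ c ih =>
    rw [Finset.prod_range_succ, ih]
    have h1 : b + (c + 1) - 1 = (b + c - 1) + 1 := by omega
    rw [h1, Nat.factorial_succ]
    have h2 : ((b + c - 1 : ℕ) : ℝ) = (b : ℝ) + c - 1 := by
      push_cast [Nat.cast_sub (show 1 ≤ b + c by omega)]; ring
    have h3 : (((b-1)).factorial : ℝ) ≠ 0 := Nat.cast_ne_zero.2 (Nat.factorial_ne_zero _)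
    push_cast [h2]
    field_simp
    ring

lemma int_exp (m : ℕ) (hm : 0 < m) :
    ∫ t in Set.Ioi (0 : ℝ), Real.exp (-((m : ℝ) * t)) = 1 / m := by
  have hb : (0 : ℝ) < m := by exact_mod_cast hm
  have := MeasureTheory.integral_comp_mul_left_Ioi (fun u => Real.exp (-u)) 0 hb
  simp only [mul_zero] at this
  rw [this, integral_exp_neg_Ioi]
  simp [one_div]

lemma inner_eval (n l m : ℕ) (hl1 : 1 ≤ l) (hl : l ≤ n) :
    ∑ i ∈ Finset.range (n - l + 1),
      (-1 : ℝ) ^ i * (((n - l).choose i : ℕ) : ℝ) * (((n + l + i).choose (n - l) : ℕ) : ℝ)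
        * (1 / ((m : ℝ) + (l + i)))
    = (∏ r ∈ Finset.range (n - l), ((n : ℝ) - m - r))
      / (∏ s ∈ Finset.range (n - l + 1), ((m : ℝ) + l + s)) := by
  set M := n - l with hM
  have hden : ∀ s : ℕ, s ≤ M → ((m : ℝ) + l) + (s : ℝ) ≠ 0 := by
    intro s _
    have : (0 : ℝ) < (m : ℝ) + l + s := by
      have : (1 : ℝ) ≤ (l : ℝ) := by exact_mod_cast hl1
      positivity
    linarith
  have hS := Sker_eq M ((n : ℝ) + l) ((m : ℝ) + l) hden
  have h1 : Sker M ((n : ℝ) + l) ((m : ℝ) + l)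
      = (M.factorial : ℝ) * ∑ i ∈ Finset.range (M + 1),
        (-1 : ℝ) ^ i * ((M.choose i : ℕ) : ℝ) * (((n + l + i).choose M : ℕ) : ℝ)
          * (1 / ((m : ℝ) + (l + i))) := by
    rw [Sker, Finset.mul_sum]
    refine Finset.sum_congr rfl fun i _ => ?_
    have hle : M ≤ n + l + i := by omega
    have hprod : (∏ r ∈ Finset.range M, ((n : ℝ) + l + i - r))
        = (M.factorial : ℝ) * (((n + l + i).choose M : ℕ) : ℝ) := by
      have e : (∏ r ∈ Finset.range M, ((n : ℝ) + l + i - r))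
          = ∏ r ∈ Finset.range M, (((n + l + i : ℕ) : ℝ) - r) :=
        Finset.prod_congr rfl fun r _ => by push_cast; ring
      rw [e, cast_choose_prod hle]
      field_simp
    rw [hprod]
    have : (m : ℝ) + l + i ≠ 0 := by
      have h0 : (0:ℝ) ≤ (m:ℝ) := by positivity
      have h2 : (1 : ℝ) ≤ (l : ℝ) := by exact_mod_cast hl1
      have h3 : (0:ℝ) ≤ (i:ℝ) := by positivity
      intro hc; linarith
    field_simp
    ring
  rw [h1] at hS
  have hMf : (M.factorial : ℝ) ≠ 0 := Nat.cast_ne_zero.2 (Nat.factorial_ne_zero _)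
  have hnum : (∏ r ∈ Finset.range M, ((n : ℝ) + l - ((m : ℝ) + l) - r))
      = ∏ r ∈ Finset.range M, ((n : ℝ) - m - r) :=
    Finset.prod_congr rfl fun r _ => by ring
  rw [hnum] at hS
  apply mul_left_cancel₀ hMf
  rw [hS, mul_div_assoc]

lemma expA_eq (n k : ℕ) (t : ℝ) : expA n k t
    = ∑ j ∈ Finset.range (n - k + 1),
      (-1 : ℝ) ^ j * ((n - k).choose j : ℝ) * ((n + k + j).choose (n - k) : ℝ)
        * Real.exp (-(((k + j : ℕ) : ℝ) * t)) := by
  simp only [expA, aKind]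
  refine Finset.sum_congr rfl fun j _ => ?_
  rw [show -(((k + j : ℕ) : ℝ) * t) = ((k + j : ℕ) : ℝ) * (-t) by ring, Real.exp_nat_mul]

lemma integrable_exp_coef (m : ℕ) (hm : 0 < m) (C : ℝ) :
    MeasureTheory.IntegrableOn (fun t => C * Real.exp (-((m : ℝ) * t))) (Set.Ioi (0:ℝ)) := by
  have h := exp_neg_integrableOn_Ioi 0 (show (0:ℝ) < m by exact_mod_cast hm)
  have h2 := h.const_mul C
  simpa [neg_mul, MeasureTheory.IntegrableOn] using h2

lemma integral_expA (n k : ℕ) (hk1 : 1 ≤ k) :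
    ∫ t in Set.Ioi (0 : ℝ), expA n k t
    = ∑ j ∈ Finset.range (n - k + 1),
      (-1 : ℝ) ^ j * ((n - k).choose j : ℝ) * ((n + k + j).choose (n - k) : ℝ)
        * (1 / ((k + j : ℕ) : ℝ)) := by
  simp only [expA_eq]
  rw [MeasureTheory.integral_finset_sum _ (fun j _ => integrable_exp_coef (k + j) (by omega) _)]
  refine Finset.sum_congr rfl fun j _ => ?_
  rw [MeasureTheory.integral_const_mul, int_exp (k + j) (by omega)]

lemma integral_expA_mul (n k l : ℕ) (hk1 : 1 ≤ k) (hl1 : 1 ≤ l) :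
    ∫ t in Set.Ioi (0 : ℝ), expA n k t * expA n l t
    = ∑ j ∈ Finset.range (n - k + 1), ∑ i ∈ Finset.range (n - l + 1),
      ((-1 : ℝ) ^ j * ((n - k).choose j : ℝ) * ((n + k + j).choose (n - k) : ℝ))
      * ((-1 : ℝ) ^ i * ((n - l).choose i : ℝ) * ((n + l + i).choose (n - l) : ℝ))
        * (1 / (((k + j) + (l + i) : ℕ) : ℝ)) := by
  have hfun : ∀ t : ℝ, expA n k t * expA n l t
      = ∑ j ∈ Finset.range (n - k + 1), ∑ i ∈ Finset.range (n - l + 1),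
        (((-1 : ℝ) ^ j * ((n - k).choose j : ℝ) * ((n + k + j).choose (n - k) : ℝ))
        * ((-1 : ℝ) ^ i * ((n - l).choose i : ℝ) * ((n + l + i).choose (n - l) : ℝ)))
          * Real.exp (-((((k + j) + (l + i) : ℕ) : ℝ) * t)) := by
    intro t
    rw [expA_eq, expA_eq, Finset.sum_mul_sum]
    refine Finset.sum_congr rfl fun j _ => Finset.sum_congr rfl fun i _ => ?_
    rw [show -((((k + j) + (l + i) : ℕ) : ℝ) * t)
        = -(((k + j : ℕ) : ℝ) * t) + -(((l + i : ℕ) : ℝ) * t) by push_cast; ring, Real.exp_add]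
    ring
  simp only [hfun]
  rw [MeasureTheory.integral_finset_sum _ (fun j _ => by
    exact MeasureTheory.integrable_finset_sum _
      (fun i _ => integrable_exp_coef ((k + j) + (l + i)) (by omega) _))]
  refine Finset.sum_congr rfl fun j _ => ?_
  rw [MeasureTheory.integral_finset_sum _
    (fun i _ => integrable_exp_coef ((k + j) + (l + i)) (by omega) _)]
  refine Finset.sum_congr rfl fun i _ => ?_
  rw [MeasureTheory.integral_const_mul, int_exp ((k + j) + (l + i)) (by omega)]

lemma integral_mul_eq (n k l : ℕ) (hk1 : 1 ≤ k) (hk : k ≤ n) (hl1 : 1 ≤ l) (hl : l ≤ n) :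
    ∫ t in Set.Ioi (0 : ℝ), expA n k t * expA n l t
    = ∑ j ∈ Finset.range (n - k + 1),
        ((-1 : ℝ) ^ j * ((n - k).choose j : ℝ) * ((n + k + j).choose (n - k) : ℝ))
        * ((∏ r ∈ Finset.range (n - l), ((n : ℝ) - ((k + j : ℕ) : ℝ) - r))
          / ∏ s ∈ Finset.range (n - l + 1), (((k + j : ℕ) : ℝ) + l + s)) := by
  rw [integral_expA_mul n k l hk1 hl1]
  refine Finset.sum_congr rfl fun j hj => ?_
  have e : ∀ i ∈ Finset.range (n - l + 1),
      ((-1 : ℝ) ^ j * ((n - k).choose j : ℝ) * ((n + k + j).choose (n - k) : ℝ))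
      * ((-1 : ℝ) ^ i * ((n - l).choose i : ℝ) * ((n + l + i).choose (n - l) : ℝ))
        * (1 / (((k + j) + (l + i) : ℕ) : ℝ))
      = ((-1 : ℝ) ^ j * ((n - k).choose j : ℝ) * ((n + k + j).choose (n - k) : ℝ))
        * ((-1 : ℝ) ^ i * ((n - l).choose i : ℝ) * ((n + l + i).choose (n - l) : ℝ)
          * (1 / (((k + j : ℕ) : ℝ) + ((l : ℝ) + (i : ℝ))))) := by
    intro i _
    push_cast
    ring
  rw [Finset.sum_congr rfl e, ← Finset.mul_sum]
  congr 1
  exact inner_eval n l (k + j) hl1 hl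

lemma num_zero (n l m : ℕ) (h1 : l < m) (h2 : m ≤ n) :
    ∏ r ∈ Finset.range (n - l), ((n : ℝ) - (m : ℝ) - r) = 0 := by
  refine Finset.prod_eq_zero (i := n - m) (Finset.mem_range.2 (by omega)) ?_
  have : ((n - m : ℕ) : ℝ) = (n : ℝ) - m := by
    push_cast [Nat.cast_sub h2]; ring
  rw [this]; ring

lemma ortho_lt (n k l : ℕ) (hk1 : 1 ≤ k) (hk : k ≤ n) (hl1 : 1 ≤ l) (hl : l ≤ n)
    (hlk : l < k) : ∫ t in Set.Ioi (0 : ℝ), expA n k t * expA n l t = 0 := by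
  rw [integral_mul_eq n k l hk1 hk hl1 hl]
  refine Finset.sum_eq_zero fun j hj => ?_
  rw [num_zero n l (k + j) (by omega) (by have := Finset.mem_range.1 hj; omega)]
  simp

lemma diag_eq (n k : ℕ) (hk1 : 1 ≤ k) (hk : k ≤ n) :
    ∫ t in Set.Ioi (0 : ℝ), expA n k t * expA n k t = 1 / (2 * (k : ℝ)) := by
  rw [integral_mul_eq n k k hk1 hk hk1 hk]
  rw [Finset.sum_eq_single_of_mem 0 (Finset.mem_range.2 (by omega)) (fun j hj hj0 => by
    rw [num_zero n k (k + j) (by omega) (by have := Finset.mem_range.1 hj; omega)]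
    simp)]
  have hnum : ∏ r ∈ Finset.range (n - k), ((n : ℝ) - ((k + 0 : ℕ) : ℝ) - r)
      = (((n - k).factorial : ℕ) : ℝ) := by
    have e : ∀ r ∈ Finset.range (n - k), (n : ℝ) - ((k + 0 : ℕ) : ℝ) - r
        = ((n - k : ℕ) : ℝ) - r := by
      intro r _; push_cast [Nat.cast_sub hk]; ring
    rw [Finset.prod_congr rfl e, prod_desc (n - k) (n - k) le_rfl]
    simp
  have hden : ∏ s ∈ Finset.range (n - k + 1), (((k + 0 : ℕ) : ℝ) + k + s)
      = (((n + k).factorial : ℕ) : ℝ) / (((2 * k - 1).factorial : ℕ) : ℝ) := by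
    have e : ∀ s ∈ Finset.range (n - k + 1), ((k + 0 : ℕ) : ℝ) + k + s
        = ((2 * k : ℕ) : ℝ) + s := by
      intro s _; push_cast; ring
    rw [Finset.prod_congr rfl e, prod_asc (2 * k) (by omega) (n - k + 1),
      show 2 * k + (n - k + 1) - 1 = n + k by omega]
  have hch : (((n + k + 0).choose (n - k) : ℕ) : ℝ)
      = (((n + k).factorial : ℕ) : ℝ)
        / ((((n - k).factorial : ℕ) : ℝ) * (((2 * k).factorial : ℕ) : ℝ)) := by
    rw [Nat.add_zero, Nat.cast_choose ℝ (by omega : n - k ≤ n + k),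
      show n + k - (n - k) = 2 * k by omega]
  rw [hnum, hden, hch]
  have h2k : (((2 * k).factorial : ℕ) : ℝ) = (2 * (k : ℝ)) * (((2 * k - 1).factorial : ℕ) : ℝ) := by
    have := Nat.mul_factorial_pred (show 2 * k ≠ 0 by omega)
    have h := congrArg (fun x : ℕ => (x : ℝ)) this
    push_cast at h
    rw [← h]
  have hf1 : (((n + k).factorial : ℕ) : ℝ) ≠ 0 := Nat.cast_ne_zero.2 (Nat.factorial_ne_zero _)
  have hf2 : (((n - k).factorial : ℕ) : ℝ) ≠ 0 := Nat.cast_ne_zero.2 (Nat.factorial_ne_zero _)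
  have hf3 : (((2 * k - 1).factorial : ℕ) : ℝ) ≠ 0 := Nat.cast_ne_zero.2 (Nat.factorial_ne_zero _)
  have hf4 : (2 * (k : ℝ)) ≠ 0 := by
    have : (1 : ℝ) ≤ (k : ℝ) := by exact_mod_cast hk1
    intro hc; linarith
  rw [h2k]
  simp only [pow_zero, Nat.choose_zero_right, Nat.cast_one, one_mul]
  field_simp

lemma integral_expA_eq (n k : ℕ) (hk1 : 1 ≤ k) (hk : k ≤ n) :
    ∫ t in Set.Ioi (0 : ℝ), expA n k t = 1 / (k : ℝ) := by
  rw [integral_expA n k hk1]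
  have e : ∀ j ∈ Finset.range (n - k + 1),
      (-1 : ℝ) ^ j * ((n - k).choose j : ℝ) * ((n + k + j).choose (n - k) : ℝ)
        * (1 / ((k + j : ℕ) : ℝ))
      = (-1 : ℝ) ^ j * ((n - k).choose j : ℝ) * ((n + k + j).choose (n - k) : ℝ)
        * (1 / (((0 : ℕ) : ℝ) + ((k : ℝ) + (j : ℝ)))) := by
    intro j _; push_cast; ring
  rw [Finset.sum_congr rfl e, inner_eval n k 0 hk1 hk]
  have hnum : ∏ r ∈ Finset.range (n - k), ((n : ℝ) - ((0 : ℕ) : ℝ) - r)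
      = ((n.factorial : ℕ) : ℝ) / ((k.factorial : ℕ) : ℝ) := by
    have e2 : ∀ r ∈ Finset.range (n - k), (n : ℝ) - ((0 : ℕ) : ℝ) - r = (n : ℝ) - r := by
      intro r _; push_cast; ring
    rw [Finset.prod_congr rfl e2, prod_desc (n - k) n (by omega),
      show n - (n - k) = k by omega]
  have hden : ∏ s ∈ Finset.range (n - k + 1), (((0 : ℕ) : ℝ) + k + s)
      = ((n.factorial : ℕ) : ℝ) / (((k - 1).factorial : ℕ) : ℝ) := by
    have e2 : ∀ s ∈ Finset.range (n - k + 1), ((0 : ℕ) : ℝ) + k + s = ((k : ℕ) : ℝ) + s := by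
      intro s _; push_cast; ring
    rw [Finset.prod_congr rfl e2, prod_asc k hk1 (n - k + 1),
      show k + (n - k + 1) - 1 = n by omega]
  rw [hnum, hden]
  have hkf : ((k.factorial : ℕ) : ℝ) = (k : ℝ) * (((k - 1).factorial : ℕ) : ℝ) := by
    have := Nat.mul_factorial_pred (show k ≠ 0 by omega)
    have h := congrArg (fun x : ℕ => (x : ℝ)) this
    push_cast at h
    rw [← h]
  have hf1 : ((n.factorial : ℕ) : ℝ) ≠ 0 := Nat.cast_ne_zero.2 (Nat.factorial_ne_zero _)
  have hf2 : (((k - 1).factorial : ℕ) : ℝ) ≠ 0 := Nat.cast_ne_zero.2 (Nat.factorial_ne_zero _)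
  have hf4 : (k : ℝ) ≠ 0 := by
    have : (1 : ℝ) ≤ (k : ℝ) := by exact_mod_cast hk1
    intro hc; linarith
  rw [hkf]
  field_simp

theorem stmt_19 (n k l : ℕ) (hk1 : 1 ≤ k) (hk : k ≤ n) (hl1 : 1 ≤ l) (hl : l ≤ n) :
    (k ≠ l → ∫ t in Set.Ioi (0 : ℝ), expA n k t * expA n l t = 0) ∧
    (∫ t in Set.Ioi (0 : ℝ), expA n k t * expA n k t = 1 / (2 * k)) ∧
    (∫ t in Set.Ioi (0 : ℝ), expA n k t = 1 / k) := by
  refine ⟨fun hne => ?_, diag_eq n k hk1 hk, integral_expA_eq n k hk1 hk⟩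
  rcases lt_or_gt_of_ne hne with h | h
  · have hcomm : (∫ t in Set.Ioi (0 : ℝ), expA n k t * expA n l t)
        = ∫ t in Set.Ioi (0 : ℝ), expA n l t * expA n k t := by
      congr 1; ext t; ring
    rw [hcomm]
    exact ortho_lt n l k hl1 hl hk1 hk h
  · exact ortho_lt n k l hk1 hk hl1 hl h
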